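/- Suppose G acts freely and properly on M, H: T*M → ℝ is G-invariant, the fiber derivative 𝔽H: T*M → TM is fiberwise linear and non-degenerate when restricted to J⁻¹(0), and ℋ_x ∩ 𝒱_x = 0 for all x ∈ M, where 𝒱_x is the tangent space to the G-orbit through x and ℋ_x := 𝔽H(J⁻¹(0) ∩ T*_xM). Then T_xM = ℋ_x ⊕ 𝒱_x for all x, and ℋ defines a principal connection on the principal bundle π: M → M/G. -/
import Mathlib


/-- Suppose `G` acts freely (and properly) on `M`, `H : T*M → ℝ` is
`G`-invariant, the fiber derivative `𝔽H : T*M → TM` is fiberwise linear and non-degenerate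
when restricted to `J⁻¹(0)`, and `ℋ_x ∩ 𝒱_x = 0` for all `x`, where `𝒱_x` is the tangent
space to the `G`-orbit through `x` and `ℋ_x := 𝔽H(J⁻¹(0) ∩ T*_xM)`.  Then
`T_xM = ℋ_x ⊕ 𝒱_x` for all `x`, and the distribution `ℋ` is `G`-invariant; i.e. `ℋ`
defines a principal connection on `π : M → M/G` (a `G`-invariant distribution complementary
to the vertical distribution).

Trivialized model: fibers of `TM` are `V`, of `T*M` are `Dual ℝ V`; `gen x ξ = ξ_M(x)`;
freeness of the action is expressed infinitesimally by injectivity of `gen x`;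
`J⁻¹(0) ∩ T*_xM = ker ((gen x).dualMap)`; `𝒱_x = range (gen x)`;
`ℋ_x = (FH x) (ker (gen x).dualMap)`. -/
theorem FH_J0_defines_principal_connection
    {G : Type*} [Group G] {M : Type*} [MulAction G M]
    {V : Type*} [AddCommGroup V] [Module ℝ V] [FiniteDimensional ℝ V]
    {𝔤 : Type*} [AddCommGroup 𝔤] [Module ℝ 𝔤] [FiniteDimensional ℝ 𝔤]
    (dΦ : G → M → V ≃ₗ[ℝ] V)
    (Ad : G → 𝔤 ≃ₗ[ℝ] 𝔤)
    (gen : M → 𝔤 →ₗ[ℝ] V)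
    (hgen : ∀ (g : G) (x : M) (ξ : 𝔤), gen (g • x) (Ad g ξ) = dΦ g x (gen x ξ))
    -- freeness of the action (infinitesimally): ξ ↦ ξ_M(x) is injective
    (hfree : ∀ x : M, Function.Injective (gen x))
    (H : M → Module.Dual ℝ V → ℝ)
    -- the fiber derivative is fiberwise linear
    (FH : M → Module.Dual ℝ V →ₗ[ℝ] V)
    (hFH : ∀ (x : M) (α β : Module.Dual ℝ V),
      β (FH x α) = deriv (fun ε : ℝ => H x (α + ε • β)) 0)
    -- G-invariance of the Hamiltonian
    (hH : ∀ (g : G) (x : M) (α : Module.Dual ℝ V),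
      H (g • x) (α.comp (dΦ g x).symm.toLinearMap) = H x α)
    -- non-degeneracy of 𝔽H on J⁻¹(0)
    (hnondeg : ∀ (x : M) (α : Module.Dual ℝ V),
      α ∈ LinearMap.ker (gen x).dualMap → FH x α = 0 → α = 0)
    -- ℋ_x ∩ 𝒱_x = 0
    (htriv : ∀ x : M,
      (LinearMap.ker (gen x).dualMap).map (FH x) ⊓ LinearMap.range (gen x) = ⊥) :
    -- T_xM = ℋ_x ⊕ 𝒱_x, and ℋ is G-invariant: a principal connection
    (∀ x : M,
      IsCompl ((LinearMap.ker (gen x).dualMap).map (FH x)) (LinearMap.range (gen x))) ∧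
    (∀ (g : G) (x : M),
      ((LinearMap.ker (gen x).dualMap).map (FH x)).map (dΦ g x).toLinearMap
        = (LinearMap.ker (gen (g • x)).dualMap).map (FH (g • x))) := by
  constructor
  · intro x
    set K := LinearMap.ker (gen x).dualMap with hKdef
    have hmap : K.map (FH x) = LinearMap.range ((FH x).comp K.subtype) := by
      rw [LinearMap.range_comp, Submodule.range_subtype]
    have hinj : Function.Injective ((FH x).comp K.subtype) := by
      intro a b hab
      have hd : FH x ((a : Module.Dual ℝ V) - b) = 0 := by
        simp only [map_sub, sub_eq_zero]
        simpa [LinearMap.comp_apply] using hab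
      have hmem : (a : Module.Dual ℝ V) - b ∈ LinearMap.ker (gen x).dualMap :=
        Submodule.sub_mem _ a.2 b.2
      exact Subtype.ext (sub_eq_zero.mp (hnondeg x _ hmem hd))
    have h1 : Module.finrank ℝ (K.map (FH x)) = Module.finrank ℝ K := by
      rw [hmap, LinearMap.finrank_range_of_inj hinj]
    have h2 : Module.finrank ℝ (LinearMap.range (gen x)) + Module.finrank ℝ K
        = Module.finrank ℝ V := by
      have hr : Module.finrank ℝ (LinearMap.range (gen x).dualMap)
          = Module.finrank ℝ (LinearMap.range (gen x)) :=
        LinearMap.finrank_range_dualMap_eq_finrank_range (gen x)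
      have hrn := LinearMap.finrank_range_add_finrank_ker (gen x).dualMap
      rw [hr, ← hKdef] at hrn
      rw [hrn, Subspace.dual_finrank_eq]
    have hsup : K.map (FH x) ⊔ LinearMap.range (gen x) = ⊤ := by
      apply Submodule.eq_top_of_finrank_eq
      have := Submodule.finrank_sup_add_finrank_inf_eq (K.map (FH x))
        (LinearMap.range (gen x))
      rw [htriv x, finrank_bot, add_zero] at this
      omega
    exact ⟨disjoint_iff.mpr (htriv x), codisjoint_iff.mpr hsup⟩
  · intro g x
    have sep : ∀ v w : V, (∀ φ : Module.Dual ℝ V, φ v = φ w) → v = w := by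
      intro v w h
      have : v - w = 0 := by
        rw [← Module.forall_dual_apply_eq_zero_iff ℝ (v - w)]
        intro φ; simp [h φ]
      exact sub_eq_zero.mp this
    have hequiv : ∀ α : Module.Dual ℝ V,
        FH (g • x) (α.comp (dΦ g x).symm.toLinearMap) = dΦ g x (FH x α) := by
      intro α
      apply sep
      intro β
      set γ : Module.Dual ℝ V := β.comp (dΦ g x).toLinearMap with hγ
      have hβ : β = γ.comp (dΦ g x).symm.toLinearMap := by
        ext v; simp [hγ]
      calc β (FH (g • x) (α.comp (dΦ g x).symm.toLinearMap))
          = (γ.comp (dΦ g x).symm.toLinearMap)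
              (FH (g • x) (α.comp (dΦ g x).symm.toLinearMap)) := by rw [← hβ]
        _ = deriv (fun ε : ℝ => H (g • x)
              (α.comp (dΦ g x).symm.toLinearMap
                + ε • γ.comp (dΦ g x).symm.toLinearMap)) 0 := hFH _ _ _
        _ = deriv (fun ε : ℝ => H x (α + ε • γ)) 0 := by
            congr 1
            funext ε
            have he : α.comp (dΦ g x).symm.toLinearMap
                + ε • γ.comp (dΦ g x).symm.toLinearMap
                = (α + ε • γ).comp (dΦ g x).symm.toLinearMap := by
              ext v; simp
            rw [he, hH]
        _ = γ (FH x α) := (hFH x α γ).symm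
        _ = β (dΦ g x (FH x α)) := by simp [hγ]
    have hker : (LinearMap.ker (gen x).dualMap).map
          ((dΦ g x).symm.toLinearMap.dualMap)
        = LinearMap.ker (gen (g • x)).dualMap := by
      ext β
      simp only [Submodule.mem_map, LinearMap.mem_ker]
      constructor
      · rintro ⟨α, hα, rfl⟩
        have hα' : ∀ ζ : 𝔤, α (gen x ζ) = 0 := by
          intro ζ
          have := LinearMap.ext_iff.mp hα ζ
          simpa using this
        ext ξ
        have hg : gen (g • x) ξ = dΦ g x (gen x ((Ad g).symm ξ)) := by
          rw [← hgen]; simp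
        simp [LinearMap.dualMap_apply, hg, hα']
      · intro hβ
        have hβ' : ∀ ξ : 𝔤, β (gen (g • x) ξ) = 0 := by
          intro ξ
          have := LinearMap.ext_iff.mp hβ ξ
          simpa using this
        refine ⟨β.comp (dΦ g x).toLinearMap, ?_, ?_⟩
        · ext ζ
          have : (dΦ g x) (gen x ζ) = gen (g • x) (Ad g ζ) := (hgen g x ζ).symm
          simp [LinearMap.dualMap_apply, this, hβ']
        · ext v; simp
    have hcomp : (dΦ g x).toLinearMap.comp (FH x)
        = (FH (g • x)).comp ((dΦ g x).symm.toLinearMap.dualMap) := by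
      ext α
      simp only [LinearMap.comp_apply, LinearMap.dualMap_apply]
      exact (hequiv α).symm
    calc ((LinearMap.ker (gen x).dualMap).map (FH x)).map (dΦ g x).toLinearMap
        = (LinearMap.ker (gen x).dualMap).map ((dΦ g x).toLinearMap.comp (FH x)) :=
          (Submodule.map_comp _ _ _).symm
      _ = (LinearMap.ker (gen x).dualMap).map
            ((FH (g • x)).comp ((dΦ g x).symm.toLinearMap.dualMap)) := by rw [hcomp]
      _ = ((LinearMap.ker (gen x).dualMap).map
            ((dΦ g x).symm.toLinearMap.dualMap)).map (FH (g • x)) :=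
          Submodule.map_comp _ _ _
      _ = (LinearMap.ker (gen (g • x)).dualMap).map (FH (g • x)) := by rw [hker]
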